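/- For a block diagonal matrix A with diagonal blocks A_1,…,A_m, and any p ≥ 1, the Rademacher norm satisfies ‖A‖_{ε,p} = max_{l≤m} ‖A_l‖_{ε,p}, where ‖A‖_{ε,p} := sup_{‖s‖₂,‖t‖₂≤1} (E|Σ_{ij} a_{ij} ε_{ij} s_i t_j|^p)^{1/p} and ε_{ij} are independent symmetric ±1 random variables. -/

import Mathlib

open MeasureTheory ProbabilityTheory

section Aux

variable {Ω : Type*} [MeasureSpace Ω] [IsProbabilityMeasure (ℙ : Measure Ω)]
  {n : ℕ} (ε : Fin n × Fin n → Ω → ℝ) (p : ℝ)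

/-- The random bilinear form. -/
def Fr (M : Fin n → Fin n → ℝ) (s t : Fin n → ℝ) (ω : Ω) : ℝ :=
  ∑ i, ∑ j, M i j * ε (i, j) ω * s i * t j

/-- The set of p-th moments over the unit balls. -/
def SS (M : Fin n → Fin n → ℝ) : Set ℝ :=
  {x | ∃ s t : Fin n → ℝ, ∑ i, s i ^ 2 ≤ 1 ∧ ∑ j, t j ^ 2 ≤ 1 ∧
    x = (∫ ω, |Fr ε M s t ω| ^ p) ^ (1 / p)}

variable {ε p}

lemma Fr_meas (hmeas : ∀ q, Measurable (ε q)) (M : Fin n → Fin n → ℝ) (s t : Fin n → ℝ) :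
    Measurable (Fr ε M s t) := by
  refine Finset.measurable_sum _ fun i _ => Finset.measurable_sum _ fun j _ => ?_
  exact ((measurable_const.mul (hmeas (i, j))).mul_const _).mul_const _

lemma Fr_abs_le (hval : ∀ q ω, ε q ω = 1 ∨ ε q ω = -1) (M : Fin n → Fin n → ℝ)
    (s t : Fin n → ℝ) (ω : Ω) :
    |Fr ε M s t ω| ≤ ∑ i, ∑ j, |M i j| * |s i| * |t j| := by
  have hε : ∀ q, |ε q ω| = 1 := fun q => by rcases hval q ω with h | h <;> simp [h]
  calc |∑ i, ∑ j, M i j * ε (i, j) ω * s i * t j|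
      ≤ ∑ i, |∑ j, M i j * ε (i, j) ω * s i * t j| := Finset.abs_sum_le_sum_abs _ _
    _ ≤ ∑ i, ∑ j, |M i j * ε (i, j) ω * s i * t j| :=
        Finset.sum_le_sum fun i _ => Finset.abs_sum_le_sum_abs _ _
    _ = ∑ i, ∑ j, |M i j| * |s i| * |t j| := by
        refine Finset.sum_congr rfl fun i _ => Finset.sum_congr rfl fun j _ => ?_
        rw [abs_mul, abs_mul, abs_mul, hε (i, j), mul_one]

lemma Fr_memℒp (hmeas : ∀ q, Measurable (ε q)) (hval : ∀ q ω, ε q ω = 1 ∨ ε q ω = -1)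
    (M : Fin n → Fin n → ℝ) (s t : Fin n → ℝ) :
    MemLp (Fr ε M s t) (ENNReal.ofReal p) ℙ :=
  MemLp.of_bound (Fr_meas hmeas M s t).aestronglyMeasurable _
    (Filter.Eventually.of_forall fun ω => by
      rw [Real.norm_eq_abs]; exact Fr_abs_le hval M s t ω)

lemma Fr_rep (hmeas : ∀ q, Measurable (ε q)) (hval : ∀ q ω, ε q ω = 1 ∨ ε q ω = -1)
    (hp : 1 ≤ p) (M : Fin n → Fin n → ℝ) (s t : Fin n → ℝ) :
    eLpNorm (Fr ε M s t) (ENNReal.ofReal p) ℙ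
      = ENNReal.ofReal ((∫ ω, |Fr ε M s t ω| ^ p) ^ (1 / p)) := by
  have hp0 : 0 < p := lt_of_lt_of_le one_pos hp
  rw [(Fr_memℒp hmeas hval M s t).eLpNorm_eq_integral_rpow_norm
    (ENNReal.ofReal_pos.mpr hp0).ne' ENNReal.ofReal_ne_top]
  simp [ENNReal.toReal_ofReal hp0.le, Real.norm_eq_abs, one_div]

lemma SS_zero (hp : 1 ≤ p) (M : Fin n → Fin n → ℝ) : (0 : ℝ) ∈ SS ε p M := by
  have hp0 : p ≠ 0 := (lt_of_lt_of_le one_pos hp).ne'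
  refine ⟨0, 0, by simp, by simp, ?_⟩
  simp [Fr, Real.zero_rpow hp0, Real.zero_rpow (inv_ne_zero hp0), one_div]

lemma SS_nonneg {M : Fin n → Fin n → ℝ} {x : ℝ} (hx : x ∈ SS ε p M) : 0 ≤ x := by
  obtain ⟨s, t, _, _, rfl⟩ := hx
  exact Real.rpow_nonneg (integral_nonneg fun ω => Real.rpow_nonneg (abs_nonneg _) _) _

lemma SS_bddAbove (hval : ∀ q ω, ε q ω = 1 ∨ ε q ω = -1) (hp : 1 ≤ p)
    (M : Fin n → Fin n → ℝ) : BddAbove (SS ε p M) := by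
  have hp0 : 0 < p := lt_of_lt_of_le one_pos hp
  refine ⟨∑ i, ∑ j, |M i j|, fun x hx => ?_⟩
  obtain ⟨s, t, hs, ht, rfl⟩ := hx
  set B : ℝ := ∑ i, ∑ j, |M i j| with hB
  have hB0 : 0 ≤ B := Finset.sum_nonneg fun i _ => Finset.sum_nonneg fun j _ => abs_nonneg _
  have habs : ∀ ω, |Fr ε M s t ω| ≤ B := by
    intro ω
    refine (Fr_abs_le hval M s t ω).trans ?_
    refine Finset.sum_le_sum fun i _ => Finset.sum_le_sum fun j _ => ?_
    have hsi : |s i| ≤ 1 := by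
      rw [← sq_le_one_iff_abs_le_one]
      exact le_trans (Finset.single_le_sum (fun k _ => sq_nonneg (s k)) (Finset.mem_univ i)) hs
    have htj : |t j| ≤ 1 := by
      rw [← sq_le_one_iff_abs_le_one]
      exact le_trans (Finset.single_le_sum (fun k _ => sq_nonneg (t k)) (Finset.mem_univ j)) ht
    calc |M i j| * |s i| * |t j| ≤ |M i j| * 1 * 1 := by
          apply mul_le_mul (mul_le_mul le_rfl hsi (abs_nonneg _) (abs_nonneg _)) htj
            (abs_nonneg _)
          positivity
      _ = |M i j| := by ring
  have h1 : (∫ ω, |Fr ε M s t ω| ^ p) ≤ ∫ _ : Ω, B ^ p :=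
    integral_mono_of_nonneg (Filter.Eventually.of_forall fun ω =>
        Real.rpow_nonneg (abs_nonneg _) _)
      (integrable_const _)
      (Filter.Eventually.of_forall fun ω =>
        Real.rpow_le_rpow (abs_nonneg _) (habs ω) hp0.le)
  have h2 : (∫ _ : Ω, B ^ p) = B ^ p := by simp
  calc (∫ ω, |Fr ε M s t ω| ^ p) ^ (1 / p)
      ≤ (B ^ p) ^ (1 / p) := by
        apply Real.rpow_le_rpow (integral_nonneg fun ω => Real.rpow_nonneg (abs_nonneg _) _)
          (h2 ▸ h1) (by positivity)
    _ = B := by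
        rw [← Real.rpow_mul hB0, mul_one_div_cancel hp0.ne', Real.rpow_one]

end Aux

private def Abl {n m : ℕ} (A : Fin n → Fin n → ℝ) (b : Fin n → Fin m) (l : Fin m) :
    Fin n → Fin n → ℝ :=
  fun i j => if b i = l ∧ b j = l then A i j else 0

theorem stmt9
    {Ω : Type*} [MeasureSpace Ω] [IsProbabilityMeasure (ℙ : Measure Ω)]
    {n m : ℕ} (hm : 0 < m)
    (A : Fin n → Fin n → ℝ) (b : Fin n → Fin m)
    (hblock : ∀ i j, b i ≠ b j → A i j = 0)
    (ε : Fin n × Fin n → Ω → ℝ)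
    (hmeas : ∀ q, Measurable (ε q))
    (hindep : iIndepFun ε ℙ)
    (hval : ∀ q ω, ε q ω = 1 ∨ ε q ω = -1)
    (hsym : ∀ q, ℙ {ω | ε q ω = 1} = 1 / 2)
    (p : ℝ) (hp : 1 ≤ p) :
    sSup {x | ∃ s t : Fin n → ℝ, ∑ i, s i ^ 2 ≤ 1 ∧ ∑ j, t j ^ 2 ≤ 1 ∧
        x = (∫ ω, |∑ i, ∑ j, A i j * ε (i, j) ω * s i * t j| ^ p) ^ (1 / p)}
      = ⨆ l : Fin m,
        sSup {x | ∃ s t : Fin n → ℝ, ∑ i, s i ^ 2 ≤ 1 ∧ ∑ j, t j ^ 2 ≤ 1 ∧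
          x = (∫ ω, |∑ i, ∑ j, (if b i = l ∧ b j = l then A i j else 0) *
            ε (i, j) ω * s i * t j| ^ p) ^ (1 / p)} := by
  classical
  have hp0 : 0 < p := lt_of_lt_of_le one_pos hp
  have hP1 : (1 : ENNReal) ≤ ENNReal.ofReal p := by
    rw [← ENNReal.ofReal_one]; exact ENNReal.ofReal_le_ofReal hp
  haveI : Nonempty (Fin m) := ⟨⟨0, hm⟩⟩
  show sSup (SS ε p A) = ⨆ l, sSup (SS ε p (Abl A b l))
  have hSbdd : BddAbove (SS ε p A) := SS_bddAbove hval hp A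
  have hTbdd : ∀ l, BddAbove (SS ε p (Abl A b l)) := fun l => SS_bddAbove hval hp _
  have hMbdd : BddAbove (Set.range fun l => sSup (SS ε p (Abl A b l))) :=
    (Set.finite_range _).bddAbove
  apply le_antisymm
  · -- hard direction
    refine csSup_le ⟨0, SS_zero hp _⟩ ?_
    rintro x ⟨s, t, hs, ht, rfl⟩
    set Mx := ⨆ l, sSup (SS ε p (Abl A b l)) with hMx
    have hM0 : 0 ≤ Mx :=
      le_trans (le_csSup (hTbdd ⟨0, hm⟩) (SS_zero hp _)) (le_ciSup hMbdd ⟨0, hm⟩)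
    set sl : Fin m → Fin n → ℝ := fun l i => if b i = l then s i else 0 with hsl
    set tl : Fin m → Fin n → ℝ := fun l j => if b j = l then t j else 0 with htl
    set a : Fin m → ℝ := fun l => Real.sqrt (∑ i, sl l i ^ 2) with ha
    set c : Fin m → ℝ := fun l => Real.sqrt (∑ j, tl l j ^ 2) with hc
    set sh : Fin m → Fin n → ℝ := fun l i => if a l = 0 then 0 else sl l i / a l with hsh
    set th : Fin m → Fin n → ℝ := fun l j => if c l = 0 then 0 else tl l j / c l with hth
    have ha2 : ∀ l, a l ^ 2 = ∑ i, sl l i ^ 2 := fun l =>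
      Real.sq_sqrt (Finset.sum_nonneg fun i _ => sq_nonneg _)
    have hc2 : ∀ l, c l ^ 2 = ∑ j, tl l j ^ 2 := fun l =>
      Real.sq_sqrt (Finset.sum_nonneg fun j _ => sq_nonneg _)
    have hsl_zero : ∀ l, a l = 0 → ∀ i, sl l i = 0 := by
      intro l h i
      have hsum : ∑ i, sl l i ^ 2 = 0 := by rw [← ha2 l, h]; ring
      exact sq_eq_zero_iff.mp
        ((Finset.sum_eq_zero_iff_of_nonneg fun i _ => sq_nonneg (sl l i)).mp hsum i
          (Finset.mem_univ i))
    have htl_zero : ∀ l, c l = 0 → ∀ j, tl l j = 0 := by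
      intro l h j
      have hsum : ∑ j, tl l j ^ 2 = 0 := by rw [← hc2 l, h]; ring
      exact sq_eq_zero_iff.mp
        ((Finset.sum_eq_zero_iff_of_nonneg fun j _ => sq_nonneg (tl l j)).mp hsum j
          (Finset.mem_univ j))
    have hfact_s : ∀ l i, sl l i = a l * sh l i := by
      intro l i
      by_cases h : a l = 0
      · simp [hsh, h, hsl_zero l h i]
      · simp only [hsh, if_neg h]
        field_simp
    have hfact_t : ∀ l j, tl l j = c l * th l j := by
      intro l j
      by_cases h : c l = 0
      · simp [hth, h, htl_zero l h j]
      · simp only [hth, if_neg h]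
        field_simp
    have hshnorm : ∀ l, ∑ i, sh l i ^ 2 ≤ 1 := by
      intro l
      by_cases h : a l = 0
      · simp [hsh, h]
      · have : ∑ i, sh l i ^ 2 = 1 := by
          simp only [hsh, if_neg h, div_pow]
          rw [← Finset.sum_div, ← ha2 l, div_self (pow_ne_zero _ h)]
        exact this.le
    have hthnorm : ∀ l, ∑ j, th l j ^ 2 ≤ 1 := by
      intro l
      by_cases h : c l = 0
      · simp [hth, h]
      · have : ∑ j, th l j ^ 2 = 1 := by
          simp only [hth, if_neg h, div_pow]
          rw [← Finset.sum_div, ← hc2 l, div_self (pow_ne_zero _ h)]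
        exact this.le
    -- Cauchy–Schwarz
    have hsum_a : ∑ l, a l ^ 2 ≤ 1 := by
      calc ∑ l, a l ^ 2 = ∑ l, ∑ i, sl l i ^ 2 := Finset.sum_congr rfl fun l _ => ha2 l
        _ = ∑ i, ∑ l, sl l i ^ 2 := Finset.sum_comm
        _ = ∑ i, s i ^ 2 := by
            refine Finset.sum_congr rfl fun i _ => ?_
            rw [Finset.sum_eq_single (b i)]
            · simp [hsl]
            · intro l _ hl; simp [hsl, Ne.symm hl]
            · simp
        _ ≤ 1 := hs
    have hsum_c : ∑ l, c l ^ 2 ≤ 1 := by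
      calc ∑ l, c l ^ 2 = ∑ l, ∑ j, tl l j ^ 2 := Finset.sum_congr rfl fun l _ => hc2 l
        _ = ∑ j, ∑ l, tl l j ^ 2 := Finset.sum_comm
        _ = ∑ j, t j ^ 2 := by
            refine Finset.sum_congr rfl fun j _ => ?_
            rw [Finset.sum_eq_single (b j)]
            · simp [htl]
            · intro l _ hl; simp [htl, Ne.symm hl]
            · simp
        _ ≤ 1 := ht
    have hCS : ∑ l, a l * c l ≤ 1 := by
      have h2 := Finset.sum_mul_sq_le_sq_mul_sq Finset.univ a c
      have hnn : 0 ≤ ∑ l, a l * c l :=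
        Finset.sum_nonneg fun l _ => mul_nonneg (Real.sqrt_nonneg _) (Real.sqrt_nonneg _)
      have hna : 0 ≤ ∑ l, a l ^ 2 := Finset.sum_nonneg fun l _ => sq_nonneg _
      have hnc : 0 ≤ ∑ l, c l ^ 2 := Finset.sum_nonneg fun l _ => sq_nonneg _
      nlinarith [h2, hnn, hsum_a, hsum_c, hna, hnc]
    -- decomposition of Fr
    have hsum_if : ∀ i j, ∑ l, (if b i = l ∧ b j = l then A i j else 0) = A i j := by
      intro i j
      by_cases hbij : b i = b j
      · rw [Finset.sum_eq_single (b i)]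
        · simp [hbij]
        · intro l _ hl
          simp [Ne.symm hl]
        · simp
      · rw [hblock i j hbij]
        exact Finset.sum_eq_zero fun l _ => by simp
    have key1 : Fr ε A s t = ∑ l, Fr ε (Abl A b l) s t := by
      funext ω
      simp only [Finset.sum_apply]
      unfold Fr Abl
      calc ∑ i, ∑ j, A i j * ε (i, j) ω * s i * t j
          = ∑ i, ∑ j, ∑ l,
              (if b i = l ∧ b j = l then A i j else 0) * ε (i, j) ω * s i * t j := by
            refine Finset.sum_congr rfl fun i _ => Finset.sum_congr rfl fun j _ => ?_
            rw [← Finset.sum_mul, ← Finset.sum_mul, ← Finset.sum_mul, hsum_if i j]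
        _ = ∑ i, ∑ l, ∑ j,
              (if b i = l ∧ b j = l then A i j else 0) * ε (i, j) ω * s i * t j :=
            Finset.sum_congr rfl fun i _ => Finset.sum_comm
        _ = ∑ l, ∑ i, ∑ j,
              (if b i = l ∧ b j = l then A i j else 0) * ε (i, j) ω * s i * t j :=
            Finset.sum_comm
    have key2 : ∀ l, Fr ε (Abl A b l) s t = Fr ε (Abl A b l) (sl l) (tl l) := by
      intro l
      funext ω
      unfold Fr Abl
      refine Finset.sum_congr rfl fun i _ => Finset.sum_congr rfl fun j _ => ?_
      by_cases hi : b i = l <;> by_cases hj : b j = l <;> simp [hsl, htl, hi, hj]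
    have key3 : ∀ l,
        Fr ε (Abl A b l) (sl l) (tl l) = (a l * c l) • Fr ε (Abl A b l) (sh l) (th l) := by
      intro l
      funext ω
      simp only [Pi.smul_apply, smul_eq_mul, Fr, Finset.mul_sum]
      refine Finset.sum_congr rfl fun i _ => Finset.sum_congr rfl fun j _ => ?_
      rw [hfact_s l i, hfact_t l j]; ring
    have hele : ∀ l, eLpNorm (Fr ε (Abl A b l) s t) (ENNReal.ofReal p) ℙ
        ≤ ENNReal.ofReal (a l * c l) * ENNReal.ofReal Mx := by
      intro l
      rw [key2 l, key3 l, eLpNorm_const_smul,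
        Real.enorm_eq_ofReal (by positivity : (0:ℝ) ≤ a l * c l)]
      refine mul_le_mul' le_rfl ?_
      rw [Fr_rep hmeas hval hp]
      refine ENNReal.ofReal_le_ofReal
        (le_trans (le_csSup (hTbdd l) ?_) (le_ciSup hMbdd l))
      exact ⟨sh l, th l, hshnorm l, hthnorm l, rfl⟩
    have chain : ENNReal.ofReal ((∫ ω, |Fr ε A s t ω| ^ p) ^ (1 / p))
        ≤ ENNReal.ofReal Mx := by
      calc ENNReal.ofReal ((∫ ω, |Fr ε A s t ω| ^ p) ^ (1 / p))
          = eLpNorm (Fr ε A s t) (ENNReal.ofReal p) ℙ := (Fr_rep hmeas hval hp A s t).symm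
        _ = eLpNorm (∑ l, Fr ε (Abl A b l) s t) (ENNReal.ofReal p) ℙ := by rw [key1]
        _ ≤ ∑ l, eLpNorm (Fr ε (Abl A b l) s t) (ENNReal.ofReal p) ℙ :=
            eLpNorm_sum_le (fun l _ => (Fr_meas hmeas _ _ _).aestronglyMeasurable) hP1
        _ ≤ ∑ l, ENNReal.ofReal (a l * c l) * ENNReal.ofReal Mx :=
            Finset.sum_le_sum fun l _ => hele l
        _ = ENNReal.ofReal ((∑ l, a l * c l) * Mx) := by
            rw [← Finset.sum_mul, ← ENNReal.ofReal_sum_of_nonneg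
              (fun l _ => by positivity), ← ENNReal.ofReal_mul
              (Finset.sum_nonneg fun l _ => by positivity)]
        _ ≤ ENNReal.ofReal Mx :=
            ENNReal.ofReal_le_ofReal (mul_le_of_le_one_left hM0 hCS)
    exact (ENNReal.ofReal_le_ofReal_iff hM0).mp chain
  · -- easy direction
    refine ciSup_le fun l => csSup_le ⟨0, SS_zero hp _⟩ fun x hx => ?_
    obtain ⟨s, t, hs, ht, rfl⟩ := hx
    apply le_csSup hSbdd
    refine ⟨fun i => if b i = l then s i else 0, fun j => if b j = l then t j else 0,
      ?_, ?_, ?_⟩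
    · refine le_trans (Finset.sum_le_sum fun i _ => ?_) hs
      by_cases hi : b i = l <;> simp [hi, sq_nonneg]
    · refine le_trans (Finset.sum_le_sum fun j _ => ?_) ht
      by_cases hj : b j = l <;> simp [hj, sq_nonneg]
    · have heq : Fr ε A (fun i => if b i = l then s i else 0)
          (fun j => if b j = l then t j else 0) = Fr ε (Abl A b l) s t := by
        funext ω
        unfold Fr Abl
        refine Finset.sum_congr rfl fun i _ => Finset.sum_congr rfl fun j _ => ?_
        by_cases hi : b i = l <;> by_cases hj : b j = l <;> simp [hi, hj]
      rw [heq]
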